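/- Assume hypothesis (H1) holds, f(k,0) ≠ 0 for at least one k ∈ {1,...,T}, and p⁻ > q⁺ + 1. Then for every λ > 0 problem (⋆) has at least one nontrivial solution. -/

import Mathlib

set_option maxHeartbeats 1000000

open Filter

/-- `u` is a solution of problem (⋆) with parameter `lam`:
`u(0) = u(T+1) = 0` and
`|Δu(k)|^{p(k)−2}Δu(k) − |Δu(k−1)|^{p(k−1)−2}Δu(k−1) = λ·f(k,u(k))` for `k ∈ {1,…,T}`. -/
def IsSolution (T : ℕ) (p : ℕ → ℝ) (f : ℕ → ℝ → ℝ) (lam : ℝ) (u : ℕ → ℝ) : Prop :=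
  u 0 = 0 ∧ u (T + 1) = 0 ∧ ∀ k, 1 ≤ k → k ≤ T →
    |u (k + 1) - u k| ^ (p k - 2) * (u (k + 1) - u k)
      - |u k - u (k - 1)| ^ (p (k - 1) - 2) * (u k - u (k - 1)) = lam * f k (u k)

/-- `u` is nontrivial: it is not identically zero. -/
def Nontrivial' (T : ℕ) (u : ℕ → ℝ) : Prop :=
  ∃ k, 1 ≤ k ∧ k ≤ T ∧ u k ≠ 0

/-- Extend a vector `v : Fin T → ℝ` to `ℕ → ℝ` by zero outside `{1,…,T}`. -/
noncomputable def extend (T : ℕ) (v : Fin T → ℝ) : ℕ → ℝ :=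
  fun k => if h : 1 ≤ k ∧ k ≤ T then v ⟨k - 1, by omega⟩ else 0

lemma extend_of_not_mem (T : ℕ) (v : Fin T → ℝ) {k : ℕ} (h : ¬(1 ≤ k ∧ k ≤ T)) :
    extend T v k = 0 := by simp only [extend, dif_neg h]

lemma extend_mem (T : ℕ) (v : Fin T → ℝ) {k : ℕ} (h1 : 1 ≤ k) (h2 : k ≤ T) :
    extend T v k = v ⟨k - 1, by omega⟩ := by simp only [extend, dif_pos (And.intro h1 h2)]

lemma abs_extend_le (T : ℕ) (v : Fin T → ℝ) (k : ℕ) : |extend T v k| ≤ ‖v‖ := by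
  unfold extend
  split
  · exact (Real.norm_eq_abs _) ▸ norm_le_pi_norm v _
  · simp only [abs_zero]; exact norm_nonneg v

lemma continuous_extend (T : ℕ) (k : ℕ) : Continuous fun v : Fin T → ℝ => extend T v k := by
  unfold extend
  split
  · exact continuous_apply _
  · exact continuous_const

lemma extend_update (T : ℕ) (v : Fin T → ℝ) (i : Fin T) (t : ℝ) (k : ℕ) :
    extend T (Function.update v i t) k = if k = i.val + 1 then t else extend T v k := by
  have hiv := i.isLt
  by_cases h : 1 ≤ k ∧ k ≤ T
  · rw [extend_mem T _ h.1 h.2, extend_mem T v h.1 h.2, Function.update_apply]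
    by_cases hk : k = i.val + 1
    · rw [if_pos hk, if_pos (by apply Fin.ext; simp only; omega)]
    · rw [if_neg hk, if_neg (by intro hc; apply hk; have := Fin.mk.inj_iff.mp hc; omega)]
  · rw [extend_of_not_mem T _ h, extend_of_not_mem T v h,
      if_neg (by intro hc; exact h (by omega))]

theorem stmt6 (T : ℕ) (hT : 1 ≤ T) (p : ℕ → ℝ) (hp : ∀ k ≤ T + 1, 1 < p k)
    (q : ℕ → ℝ) (hq : ∀ k, 1 ≤ k → k ≤ T → 0 < q k)
    (pm : ℝ) (hpm : IsLeast (p '' Set.Icc 0 (T + 1)) pm)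
    (qp : ℝ) (hqp : IsGreatest (q '' Set.Icc 1 T) qp)
    (f : ℕ → ℝ → ℝ) (hf : ∀ k, 1 ≤ k → k ≤ T → Continuous (f k))
    -- Hypothesis (H1)
    (a b : ℕ → ℝ) (ha : ∀ k, 1 ≤ k → k ≤ T → 0 < a k)
    (hH1 : ∀ k, 1 ≤ k → k ≤ T → ∀ t : ℝ, |f k t| ≤ a k * |t| ^ q k + b k)
    (hf0 : ∃ k, 1 ≤ k ∧ k ≤ T ∧ f k 0 ≠ 0)
    (hpq : qp + 1 < pm) :
    ∀ lam : ℝ, 0 < lam →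
      ∃ u : ℕ → ℝ, IsSolution T p f lam u ∧ Nontrivial' T u := by
  classical
  intro lam hlam
  -- basic bounds
  have hpm_le : ∀ k ≤ T + 1, pm ≤ p k := fun k hk =>
    hpm.2 ⟨k, Set.mem_Icc.mpr ⟨Nat.zero_le _, hk⟩, rfl⟩
  have hpm1 : 1 < pm := by
    obtain ⟨k, hk, hk2⟩ := hpm.1
    have := hp k (Set.mem_Icc.mp hk).2
    linarith [hk2 ▸ this]
  have hqp_ge : ∀ k, 1 ≤ k → k ≤ T → q k ≤ qp := fun k h1 h2 =>
    hqp.2 ⟨k, Set.mem_Icc.mpr ⟨h1, h2⟩, rfl⟩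
  have hqp0 : 0 < qp := by
    obtain ⟨k, hk, hk2⟩ := hqp.1
    have := hq k (Set.mem_Icc.mp hk).1 (Set.mem_Icc.mp hk).2
    linarith [hk2 ▸ this]
  -- the energy functional
  set J : (Fin T → ℝ) → ℝ := fun v =>
    (∑ k ∈ Finset.range (T+1), |extend T v (k+1) - extend T v k| ^ p k / p k)
      + lam * ∑ k ∈ Finset.Icc 1 T, ∫ s in (0:ℝ)..(extend T v k), f k s with hJdef
  have hJcont : Continuous J := by
    apply Continuous.add
    · apply continuous_finset_sum
      intro k hk
      have hk' : k ≤ T + 1 := by have := Finset.mem_range.mp hk; omega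
      exact (((continuous_extend T (k+1)).sub (continuous_extend T k)).abs.rpow_const
        (fun v => Or.inr (by linarith [hp k hk']))).div_const _
    · refine continuous_const.mul (continuous_finset_sum _ fun k hk => ?_)
      obtain ⟨h1, h2⟩ := Finset.mem_Icc.mp hk
      exact (intervalIntegral.continuous_primitive
        (fun c d => (hf k h1 h2).intervalIntegrable c d) 0).comp (continuous_extend T k)
  -- constants
  set P : ℝ := ∑ k ∈ Finset.range (T+1), p k with hPdef
  have hPpos : 0 < P := Finset.sum_pos
    (fun k hk => lt_trans one_pos (hp k (by have := Finset.mem_range.mp hk; omega)))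
    ⟨0, Finset.mem_range.mpr (by omega)⟩
  have hP_ge : ∀ k ∈ Finset.range (T+1), p k ≤ P := fun k hk =>
    Finset.single_le_sum
      (fun i hi => le_of_lt (lt_trans one_pos (hp i (by have := Finset.mem_range.mp hi; omega)))) hk
  set A : ℝ := ∑ k ∈ Finset.Icc 1 T, a k with hAdef
  set B : ℝ := ∑ k ∈ Finset.Icc 1 T, |b k| with hBdef
  have hA : 0 ≤ A := Finset.sum_nonneg fun k hk =>
    (ha k (Finset.mem_Icc.mp hk).1 (Finset.mem_Icc.mp hk).2).le
  have hB : 0 ≤ B := Finset.sum_nonneg fun k _ => abs_nonneg _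
  set c : ℝ := 1 / (((T:ℝ)+1) ^ pm * P) with hcdef
  have hcpos : 0 < c := by
    apply div_pos one_pos
    exact mul_pos (Real.rpow_pos_of_pos (by positivity) _) hPpos
  set C : ℝ := lam * (A + B) with hCdef
  -- coercive lower bound
  have keybound : ∀ v : Fin T → ℝ, (T:ℝ)+1 ≤ ‖v‖ →
      c * ‖v‖ ^ pm - C * ‖v‖ ^ (qp + 1) ≤ J v := by
    intro v hv
    have hTc : (1:ℝ) ≤ (T:ℝ)+1 := by
      have : (0:ℝ) ≤ (T:ℝ) := Nat.cast_nonneg T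
      linarith
    set M := ‖v‖ with hMdef
    have hM1 : 1 ≤ M := le_trans hTc hv
    have hM0 : 0 < M := lt_of_lt_of_le one_pos hM1
    have hne : Nonempty (Fin T) := ⟨⟨0, hT⟩⟩
    obtain ⟨i, _, hi⟩ := Finset.exists_mem_eq_sup (Finset.univ : Finset (Fin T))
      Finset.univ_nonempty (fun i => ‖v i‖₊)
    have hattain : |v i| = M := by
      rw [hMdef, Pi.norm_def, hi]; simp [Real.norm_eq_abs]
    set u := extend T v with hu
    have hjmem : u (i.val+1) = v i := by
      rw [hu, extend_mem T v (by omega) (by have := i.isLt; omega)]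
      exact congrArg v (Fin.ext (by simp))
    have htel : ∃ k ∈ Finset.range (T+1), M / ((T:ℝ)+1) ≤ |u (k+1) - u k| := by
      by_contra hcon
      push_neg at hcon
      have h1 : M ≤ ∑ k ∈ Finset.range (T+1), |u (k+1) - u k| := by
        have e1 : ∑ k ∈ Finset.range (i.val+1), (u (k+1) - u k) = u (i.val+1) - u 0 :=
          Finset.sum_range_sub u (i.val+1)
        have e2 : u 0 = 0 := extend_of_not_mem T v (by omega)
        calc M = |u (i.val+1)| := by rw [hjmem, hattain]
        _ = |∑ k ∈ Finset.range (i.val+1), (u (k+1) - u k)| := by rw [e1, e2, sub_zero]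
        _ ≤ ∑ k ∈ Finset.range (i.val+1), |u (k+1) - u k| := Finset.abs_sum_le_sum_abs _ _
        _ ≤ ∑ k ∈ Finset.range (T+1), |u (k+1) - u k| :=
          Finset.sum_le_sum_of_subset_of_nonneg
            (Finset.range_subset_range.mpr (by have := i.isLt; omega)) (fun _ _ _ => abs_nonneg _)
      have h2 : ∑ k ∈ Finset.range (T+1), |u (k+1) - u k|
          < ∑ _k ∈ Finset.range (T+1), M / ((T:ℝ)+1) :=
        Finset.sum_lt_sum_of_nonempty ⟨0, Finset.mem_range.mpr (by omega)⟩
          (fun k hk => hcon k hk)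
      rw [Finset.sum_const, Finset.card_range, nsmul_eq_mul] at h2
      have he : ((T:ℝ)+1) * (M / ((T:ℝ)+1)) = M := by field_simp
      push_cast at h2
      rw [he] at h2
      linarith
    obtain ⟨k₀, hk₀mem, hk₀⟩ := htel
    have hk₀T : k₀ ≤ T + 1 := by have := Finset.mem_range.mp hk₀mem; omega
    have hterm : c * M ^ pm ≤ |u (k₀+1) - u k₀| ^ p k₀ / p k₀ := by
      have hx1 : (1:ℝ) ≤ M / ((T:ℝ)+1) := (one_le_div (by positivity)).mpr hv
      have b1 : (M / ((T:ℝ)+1)) ^ pm ≤ (M / ((T:ℝ)+1)) ^ p k₀ :=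
        Real.rpow_le_rpow_of_exponent_le hx1 (hpm_le k₀ hk₀T)
      have b2 : (M / ((T:ℝ)+1)) ^ p k₀ ≤ |u (k₀+1) - u k₀| ^ p k₀ :=
        Real.rpow_le_rpow (by positivity) hk₀ (by linarith [hp k₀ hk₀T])
      have b3 : (M / ((T:ℝ)+1)) ^ pm = M ^ pm / ((T:ℝ)+1) ^ pm :=
        Real.div_rpow hM0.le (by positivity) pm
      have b4 : c * M ^ pm = (M ^ pm / ((T:ℝ)+1) ^ pm) / P := by
        rw [hcdef]; rw [div_div]; ring
      have b5 : M ^ pm / ((T:ℝ)+1) ^ pm ≤ |u (k₀+1) - u k₀| ^ p k₀ := by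
        rw [← b3]; exact le_trans b1 b2
      rw [b4]
      exact div_le_div₀ (by positivity) b5 (by linarith [hp k₀ hk₀T]) (hP_ge k₀ hk₀mem)
    have hSum1 : c * M ^ pm ≤ ∑ k ∈ Finset.range (T+1), |u (k+1) - u k| ^ p k / p k := by
      refine le_trans hterm (Finset.single_le_sum
        (f := fun k => |u (k+1) - u k| ^ p k / p k) (fun k hk => ?_) hk₀mem)
      have hpk := hp k (by have := Finset.mem_range.mp hk; omega)
      positivity
    have hF : ∀ k ∈ Finset.Icc 1 T,
        -((a k * M ^ qp + |b k|) * M) ≤ ∫ s in (0:ℝ)..(u k), f k s := by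
      intro k hk
      obtain ⟨h1, h2⟩ := Finset.mem_Icc.mp hk
      have htM : |u k| ≤ M := abs_extend_le T v k
      have hint : |∫ s in (0:ℝ)..(u k), f k s| ≤ (a k * |u k| ^ q k + b k) * |u k| := by
        have hb := intervalIntegral.norm_integral_le_of_norm_le_const
          (C := a k * |u k| ^ q k + b k) (f := f k) (a := 0) (b := u k) ?_
        · simpa using hb
        · intro x hx
          have hxle : |x| ≤ |u k| := by
            rcases Set.mem_uIoc.mp hx with ⟨hx1, hx2⟩ | ⟨hx1, hx2⟩
            · rw [abs_of_pos hx1]; exact le_trans hx2 (le_abs_self _)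
            · rw [abs_of_nonpos hx2]
              calc -x ≤ -(u k) := by linarith
              _ ≤ |u k| := neg_le_abs _
          calc ‖f k x‖ ≤ a k * |x| ^ q k + b k := hH1 k h1 h2 x
          _ ≤ a k * |u k| ^ q k + b k := by
              have hr := Real.rpow_le_rpow (abs_nonneg x) hxle (hq k h1 h2).le
              have := (ha k h1 h2).le
              nlinarith
      have hbound2 : (a k * |u k| ^ q k + b k) * |u k| ≤ (a k * M ^ qp + |b k|) * M := by
        have hak := (ha k h1 h2).le
        apply mul_le_mul ?_ htM (abs_nonneg _) (by positivity)
        have e1 : |u k| ^ q k ≤ M ^ q k :=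
          Real.rpow_le_rpow (abs_nonneg _) htM (hq k h1 h2).le
        have e2 : M ^ q k ≤ M ^ qp := Real.rpow_le_rpow_of_exponent_le hM1 (hqp_ge k h1 h2)
        have e3 : b k ≤ |b k| := le_abs_self _
        nlinarith
      have := neg_abs_le (∫ s in (0:ℝ)..(u k), f k s)
      linarith
    have hSum2 : -((A * M ^ qp + B) * M)
        ≤ ∑ k ∈ Finset.Icc 1 T, ∫ s in (0:ℝ)..(u k), f k s := by
      have hs := Finset.sum_le_sum hF
      have he : ∑ k ∈ Finset.Icc 1 T, -((a k * M ^ qp + |b k|) * M)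
          = -((A * M ^ qp + B) * M) := by
        rw [hAdef, hBdef, Finset.sum_neg_distrib]
        congr 1
        rw [← Finset.sum_mul]
        congr 1
        rw [Finset.sum_add_distrib, ← Finset.sum_mul]
      rw [he] at hs
      linarith
    -- combine
    have hmul : lam * ((A * M ^ qp + B) * M) ≤ C * M ^ (qp + 1) := by
      have e1 : (1:ℝ) ≤ M ^ qp := Real.one_le_rpow hM1 hqp0.le
      have e2 : (A * M ^ qp + B) * M ≤ (A + B) * (M ^ qp * M) := by
        nlinarith [mul_nonneg (mul_nonneg hB hM0.le) (sub_nonneg.mpr e1)]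
      have e3 : M ^ qp * M = M ^ (qp + 1) := (Real.rpow_add_one hM0.ne' qp).symm
      rw [hCdef]
      calc lam * ((A * M ^ qp + B) * M) ≤ lam * ((A + B) * (M ^ qp * M)) :=
            mul_le_mul_of_nonneg_left e2 hlam.le
      _ = lam * (A + B) * M ^ (qp + 1) := by rw [e3]; ring
    have h4 : lam * (-((A * M ^ qp + B) * M))
        ≤ lam * ∑ k ∈ Finset.Icc 1 T, ∫ s in (0:ℝ)..(u k), f k s :=
      mul_le_mul_of_nonneg_left hSum2 hlam.le
    have h5 : lam * (-((A * M ^ qp + B) * M)) = -(lam * ((A * M ^ qp + B) * M)) := by ring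
    have hgoal : c * M ^ pm - C * M ^ (qp+1) ≤
        (∑ k ∈ Finset.range (T+1), |u (k+1) - u k| ^ p k / p k)
          + lam * ∑ k ∈ Finset.Icc 1 T, ∫ s in (0:ℝ)..(u k), f k s := by
      linarith
    rw [hu] at hgoal
    simpa only [hJdef] using hgoal
  -- existence of a minimizer
  have hcoerc : Tendsto J (cocompact (Fin T → ℝ)) atTop := by
    have h1 : Tendsto (fun v : Fin T → ℝ => ‖v‖) (cocompact _) atTop :=
      tendsto_norm_cocompact_atTop
    have h2 : Tendsto (fun M : ℝ => c * M ^ pm - C * M ^ (qp+1)) atTop atTop := by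
      have e1 : Tendsto (fun M : ℝ => M ^ (qp+1)) atTop atTop :=
        tendsto_rpow_atTop (by linarith)
      have e2 : Tendsto (fun M : ℝ => c * M ^ (pm - (qp+1)) + -C) atTop atTop :=
        tendsto_atTop_add_const_right _ (-C)
          ((tendsto_rpow_atTop (by linarith)).const_mul_atTop hcpos)
      have e3 := e1.atTop_mul_atTop₀ e2
      apply e3.congr'
      filter_upwards [eventually_gt_atTop (0:ℝ)] with M hM
      have hMe : M ^ (qp+1) * M ^ (pm - (qp+1)) = M ^ pm := by
        rw [← Real.rpow_add hM]; ring_nf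
      calc M ^ (qp+1) * (c * M ^ (pm-(qp+1)) + -C)
          = c * (M ^ (qp+1) * M ^ (pm - (qp+1))) - C * M ^ (qp+1) := by ring
      _ = c * M ^ pm - C * M ^ (qp+1) := by rw [hMe]
    apply Filter.tendsto_atTop_mono' _ _ (h2.comp h1)
    filter_upwards [h1.eventually_ge_atTop ((T:ℝ)+1)] with v hv
    exact keybound v hv
  obtain ⟨v₀, hv₀⟩ := hJcont.exists_forall_le hcoerc
  set u : ℕ → ℝ := extend T v₀ with hu
  -- Euler–Lagrange equations
  have heq : ∀ j, 1 ≤ j → j ≤ T →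
      |u (j+1) - u j| ^ (p j - 2) * (u (j+1) - u j)
        - |u j - u (j-1)| ^ (p (j-1) - 2) * (u j - u (j-1)) = lam * f j (u j) := by
    intro j hj1 hj2
    set i : Fin T := ⟨j - 1, by omega⟩ with hidef
    have hij : i.val + 1 = j := by simp only [hidef]; omega
    have ht₀ : u j = v₀ i := by rw [hu, extend_mem T v₀ hj1 hj2]
    set t₀ := v₀ i with ht₀def
    have hE : ∀ (t : ℝ) (k : ℕ),
        extend T (Function.update v₀ i t) k = if k = j then t else u k := by
      intro t k; rw [extend_update, hij, hu]
    set d : ℕ → ℝ := fun k =>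
      if k = j - 1 then |t₀ - u (j-1)| ^ (p (j-1) - 2) * (t₀ - u (j-1))
      else if k = j then -(|u (j+1) - t₀| ^ (p j - 2) * (u (j+1) - t₀)) else 0 with hd
    have hterm : ∀ k ∈ Finset.range (T+1),
        HasDerivAt (fun t : ℝ => |extend T (Function.update v₀ i t) (k+1)
          - extend T (Function.update v₀ i t) k| ^ p k / p k) (d k) t₀ := by
      intro k hk
      have hkT : k ≤ T + 1 := by have := Finset.mem_range.mp hk; omega
      have hpk := hp k hkT
      have hpk0 : p k ≠ 0 := by linarith
      by_cases h1 : k = j - 1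
      · subst h1
        have hk1j : (j - 1) + 1 = j := by omega
        have hkj : j - 1 ≠ j := by omega
        have hfun : (fun t : ℝ => |extend T (Function.update v₀ i t) ((j-1)+1)
            - extend T (Function.update v₀ i t) (j-1)| ^ p (j-1) / p (j-1))
            = fun t => |t - u (j-1)| ^ p (j-1) / p (j-1) := by
          funext t; rw [hE, hE, if_pos hk1j, if_neg hkj]
        rw [hfun]
        have hinner : HasDerivAt (fun t : ℝ => t - u (j-1)) 1 t₀ :=
          (hasDerivAt_id t₀).sub_const (u (j-1))
        have hD := ((hasDerivAt_abs_rpow (t₀ - u (j-1)) hpk).comp t₀ hinner).div_const (p (j-1))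
        have hval : d (j-1) = p (j-1) * |t₀ - u (j-1)| ^ (p (j-1) - 2) * (t₀ - u (j-1)) * 1
            / p (j-1) := by
          rw [hd]; simp only [if_pos rfl, ↓reduceIte]; field_simp
        rw [hval]
        exact hD
      · by_cases h2 : k = j
        · have hk1j : k + 1 ≠ j := by omega
          have hfun : (fun t : ℝ => |extend T (Function.update v₀ i t) (k+1)
              - extend T (Function.update v₀ i t) k| ^ p k / p k)
              = fun t => |u (k+1) - t| ^ p k / p k := by
            funext t; rw [hE, hE, if_neg hk1j, if_pos h2]
          rw [hfun]
          have hinner : HasDerivAt (fun t : ℝ => u (k+1) - t) (0 - 1) t₀ :=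
            (hasDerivAt_const t₀ (u (k+1))).sub (hasDerivAt_id t₀)
          have hD := ((hasDerivAt_abs_rpow (u (k+1) - t₀) hpk).comp t₀ hinner).div_const (p k)
          have hval : d k = p k * |u (k+1) - t₀| ^ (p k - 2) * (u (k+1) - t₀) * (0 - 1)
              / p k := by
            rw [hd]; simp only [if_neg h1, if_pos h2]
            rw [h2.symm]; field_simp [hpk0]; ring
          rw [hval]
          exact hD
        · have hk1j : k + 1 ≠ j := by omega
          have hfun : (fun t : ℝ => |extend T (Function.update v₀ i t) (k+1)
              - extend T (Function.update v₀ i t) k| ^ p k / p k)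
              = fun _ => |u (k+1) - u k| ^ p k / p k := by
            funext t; rw [hE, hE, if_neg hk1j, if_neg h2]
          rw [hfun]
          have hval : d k = 0 := by rw [hd]; simp only [if_neg h1, if_neg h2]
          rw [hval]
          exact hasDerivAt_const _ _
    have hS1 : HasDerivAt (fun t : ℝ => ∑ k ∈ Finset.range (T+1),
        |extend T (Function.update v₀ i t) (k+1)
          - extend T (Function.update v₀ i t) k| ^ p k / p k)
        (∑ k ∈ Finset.range (T+1), d k) t₀ := HasDerivAt.fun_sum hterm
    have hdsum : ∑ k ∈ Finset.range (T+1), d k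
        = |t₀ - u (j-1)| ^ (p (j-1) - 2) * (t₀ - u (j-1))
          - |u (j+1) - t₀| ^ (p j - 2) * (u (j+1) - t₀) := by
      have hsub : ({j-1, j} : Finset ℕ) ⊆ Finset.range (T+1) := by
        intro x hx
        simp only [Finset.mem_insert, Finset.mem_singleton] at hx
        rcases hx with rfl | rfl <;> exact Finset.mem_range.mpr (by omega)
      have hz : ∀ x ∈ Finset.range (T+1), x ∉ ({j-1, j} : Finset ℕ) → d x = 0 := by
        intro x _ hxn
        simp only [Finset.mem_insert, Finset.mem_singleton, not_or] at hxn
        rw [hd]; simp only [if_neg hxn.1, if_neg hxn.2]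
      rw [← Finset.sum_subset hsub hz, Finset.sum_pair (by omega : j - 1 ≠ j)]
      have hne1 : j - 1 ≠ j := by omega
      have hne2 : j ≠ j - 1 := by omega
      simp only [hd, hne1, hne2, if_true, if_false, ite_true, ite_false, if_neg hne2,
        if_pos rfl]
      ring
    have hterm2 : ∀ k ∈ Finset.Icc 1 T,
        HasDerivAt (fun t : ℝ => ∫ s in (0:ℝ)..(extend T (Function.update v₀ i t) k), f k s)
          (if k = j then f j t₀ else 0) t₀ := by
      intro k hk
      obtain ⟨h1, h2⟩ := Finset.mem_Icc.mp hk
      by_cases hkj : k = j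
      · subst hkj
        have hfun : (fun t : ℝ => ∫ s in (0:ℝ)..(extend T (Function.update v₀ i t) k), f k s)
            = fun t => ∫ s in (0:ℝ)..t, f k s := by
          funext t; rw [hE, if_pos rfl]
        rw [hfun, if_pos rfl]
        exact intervalIntegral.integral_hasDerivAt_right
          ((hf k h1 h2).intervalIntegrable _ _)
          ((hf k h1 h2).stronglyMeasurableAtFilter _ _) (hf k h1 h2).continuousAt
      · have hfun : (fun t : ℝ => ∫ s in (0:ℝ)..(extend T (Function.update v₀ i t) k), f k s)
            = fun _ => ∫ s in (0:ℝ)..(u k), f k s := by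
          funext t; rw [hE, if_neg hkj]
        rw [hfun, if_neg hkj]
        exact hasDerivAt_const _ _
    have hS2 : HasDerivAt (fun t : ℝ => ∑ k ∈ Finset.Icc 1 T,
        ∫ s in (0:ℝ)..(extend T (Function.update v₀ i t) k), f k s)
        (∑ k ∈ Finset.Icc 1 T, if k = j then f j t₀ else 0) t₀ := HasDerivAt.fun_sum hterm2
    have hesum : (∑ k ∈ Finset.Icc 1 T, if k = j then f j t₀ else 0) = f j t₀ := by
      rw [Finset.sum_ite_eq' (Finset.Icc 1 T) j (fun _ => f j t₀),
        if_pos (Finset.mem_Icc.mpr ⟨hj1, hj2⟩)]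
    have hg0 : HasDerivAt (fun t : ℝ => (∑ k ∈ Finset.range (T+1),
        |extend T (Function.update v₀ i t) (k+1)
          - extend T (Function.update v₀ i t) k| ^ p k / p k)
        + lam * ∑ k ∈ Finset.Icc 1 T, ∫ s in (0:ℝ)..(extend T (Function.update v₀ i t) k), f k s)
        ((|t₀ - u (j-1)| ^ (p (j-1) - 2) * (t₀ - u (j-1))
          - |u (j+1) - t₀| ^ (p j - 2) * (u (j+1) - t₀)) + lam * f j t₀) t₀ := by
      have hadd := hS1.add ((hS2.const_mul lam))
      rw [hdsum, hesum] at hadd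
      exact hadd
    have hg : HasDerivAt (fun t : ℝ => J (Function.update v₀ i t))
        ((|t₀ - u (j-1)| ^ (p (j-1) - 2) * (t₀ - u (j-1))
          - |u (j+1) - t₀| ^ (p j - 2) * (u (j+1) - t₀)) + lam * f j t₀) t₀ := by
      simp only [hJdef]
      exact hg0
    have hmin : IsLocalMin (fun t : ℝ => J (Function.update v₀ i t)) t₀ := by
      apply Filter.Eventually.of_forall
      intro t
      have hupd : Function.update v₀ i t₀ = v₀ := by
        rw [ht₀def]; exact Function.update_eq_self i v₀
      show J (Function.update v₀ i t₀) ≤ J (Function.update v₀ i t)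
      rw [hupd]; exact hv₀ _
    have hzero := hmin.hasDerivAt_eq_zero hg
    rw [ht₀]
    linarith [hzero]
  -- assemble the solution
  refine ⟨u, ⟨by rw [hu]; exact extend_of_not_mem T v₀ (by omega),
    by rw [hu]; exact extend_of_not_mem T v₀ (by omega), heq⟩, ?_⟩
  by_contra hcon
  unfold Nontrivial' at hcon
  push_neg at hcon
  obtain ⟨k₀, h1, h2, hf0'⟩ := hf0
  have hall : ∀ m, u m = 0 := by
    intro m
    by_cases hm : 1 ≤ m ∧ m ≤ T
    · exact hcon m hm.1 hm.2
    · rw [hu]; exact extend_of_not_mem T v₀ hm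
  have hek := heq k₀ h1 h2
  simp only [hall] at hek
  simp only [sub_self, mul_zero, sub_zero, zero_sub, neg_zero] at hek
  exact hf0' ((mul_eq_zero.mp hek.symm).resolve_left (ne_of_gt hlam))
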